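/- The series expansion of the arctangent: for all real x ≠ 0, arctan(x) = i · Σ_{m≥1} (1/(2m−1)) · (1/(1 + 2i/x)^(2m−1) − 1/(1 − 2i/x)^(2m−1)), where the series converges. -/

import Mathlib

open Complex

theorem arctan_series_complex (x : ℝ) (hx : x ≠ 0) :
    ∃ S : ℂ,
      HasSum (fun m : ℕ =>
        (1 / (2 * (m : ℂ) + 1)) *
          (((1 + 2 * Complex.I / (x : ℂ)) ^ (2 * m + 1))⁻¹ -
            ((1 - 2 * Complex.I / (x : ℂ)) ^ (2 * m + 1))⁻¹)) S ∧
      Complex.I * S = ((Real.arctan x : ℝ) : ℂ) := by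
  have hx' : (x : ℂ) ≠ 0 := ofReal_ne_zero.mpr hx
  -- generic norm fact
  have key : ∀ t : ℝ, t ≠ 0 → ‖((1 + (t : ℂ) * I))⁻¹‖ < 1 := by
    intro t ht
    have h0 : Complex.normSq (1 + (t : ℂ) * I) = 1 + t ^ 2 := by
      simp [Complex.normSq_apply]; ring
    have h1 : 1 < ‖(1 + (t : ℂ) * I)‖ := by
      nlinarith [Complex.sq_norm (1 + (t : ℂ) * I), norm_nonneg (1 + (t : ℂ) * I),
        sq_pos_of_ne_zero ht]
    rw [norm_inv]
    exact inv_lt_one_of_one_lt₀ h1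
  have hrw1 : (1 + 2 * I / (x : ℂ)) = 1 + ((2 / x : ℝ) : ℂ) * I := by push_cast; ring
  have hrw2 : (1 - 2 * I / (x : ℂ)) = 1 + ((-(2 / x) : ℝ) : ℂ) * I := by push_cast; ring
  set z : ℂ := (1 + 2 * I / (x : ℂ))⁻¹ with hz_def
  set w : ℂ := (1 - 2 * I / (x : ℂ))⁻¹ with hw_def
  have hzn : ‖z‖ < 1 := by rw [hz_def, hrw1]; exact key _ (by positivity)
  have hwn : ‖w‖ < 1 := by
    rw [hw_def, hrw2]; exact key _ (by simp; positivity)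
  have hzI : ‖I * z‖ < 1 := by rwa [norm_mul, norm_I, one_mul]
  have hwI : ‖I * w‖ < 1 := by rwa [norm_mul, norm_I, one_mul]
  have h1 := Complex.hasSum_arctan hzI
  have h2 := Complex.hasSum_arctan hwI
  have hs := (h1.sub h2).mul_left (-I)
  have hIpow : ∀ (u : ℂ) (m : ℕ), (-1 : ℂ) ^ m * (I * u) ^ (2 * m + 1) = I * u ^ (2 * m + 1) := by
    intro u m
    rw [mul_pow, pow_succ, pow_mul, I_sq, ← mul_assoc, ← mul_assoc, ← mul_pow]
    norm_num
  refine ⟨-I * (Complex.arctan (I * z) - Complex.arctan (I * w)), ?_, ?_⟩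
  · refine hs.congr_fun fun m => ?_
    have e1 := hIpow z m
    have e2 := hIpow w m
    have hc : ((2 * m + 1 : ℕ) : ℂ) = 2 * (m : ℂ) + 1 := by push_cast; ring
    rw [← inv_pow, ← inv_pow]
    rw [e1, e2, hc]
    ring_nf
    rw [I_sq]
    ring
  · rw [show I * (-I * (Complex.arctan (I * z) - Complex.arctan (I * w)))
        = -(I * I) * (Complex.arctan (I * z) - Complex.arctan (I * w)) by ring,
      I_mul_I, neg_neg, one_mul]
    -- now compute the two arctans via log
    have hne1 : (1 + 2 * I / (x : ℂ)) ≠ 0 := by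
      rw [hrw1]
      intro h
      have := congrArg Complex.im h
      simp at this
      exact absurd this (by positivity)
    have hne2 : (1 - 2 * I / (x : ℂ)) ≠ 0 := by
      rw [hrw2]
      intro h
      have := congrArg Complex.im h
      simp at this
      exact hx this
    have hIzI : ∀ u : ℂ, I * u * I = -u := by
      intro u; rw [mul_comm, ← mul_assoc, I_mul_I]; ring
    have h1pz : (1 : ℂ) + z ≠ 0 := by
      intro h
      have : z = -1 := by linear_combination h
      rw [this] at hzn
      simp at hzn
    have h1pw : (1 : ℂ) + w ≠ 0 := by
      intro h
      have : w = -1 := by linear_combination h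
      rw [this] at hwn
      simp at hwn
    have ha : (x : ℂ) + 2 * I ≠ 0 := by
      intro h
      have := congrArg Complex.im h
      simp at this
    have hb : (x : ℂ) - 2 * I ≠ 0 := by
      intro h
      have := congrArg Complex.im h
      simp at this
    set r : ℝ := (x ^ 2 + 1)⁻¹ with hr_def
    have hr : 0 < r := by positivity
    have hq : ((x : ℂ) ^ 2 + 1) ≠ 0 := by
      intro h
      have : ((x ^ 2 + 1 : ℝ) : ℂ) = 0 := by push_cast; linear_combination h
      rw [ofReal_eq_zero] at this
      nlinarith [sq_nonneg x]
    have hrc : (r : ℂ) = ((x : ℂ) ^ 2 + 1)⁻¹ := by rw [hr_def]; push_cast; ring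
    have e1 : (1 + I * z * I) / (1 - I * z * I) = (r : ℂ) * (1 + (x : ℂ) * I) := by
      rw [hIzI, sub_neg_eq_add, div_eq_iff h1pz, hrc, hz_def]
      field_simp [ha]
      linear_combination (-2 * (x:ℂ)) * Complex.I_sq
    have e2 : (1 + I * w * I) / (1 - I * w * I) = (r : ℂ) * (1 - (x : ℂ) * I) := by
      rw [hIzI, sub_neg_eq_add, div_eq_iff h1pw, hrc, hw_def]
      field_simp [hb]
      linear_combination (-2 * (x:ℂ)) * Complex.I_sq
    have hu : (1 : ℂ) + (x : ℂ) * I ≠ 0 := by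
      intro h
      have := congrArg Complex.re h
      simp at this
    have hu' : (1 : ℂ) - (x : ℂ) * I ≠ 0 := by
      intro h
      have := congrArg Complex.re h
      simp at this
    rw [Complex.arctan, Complex.arctan, e1, e2,
      Complex.log_ofReal_mul hr hu, Complex.log_ofReal_mul hr hu']
    have hconj : (1 : ℂ) - (x : ℂ) * I = (starRingEnd ℂ) (1 + (x : ℂ) * I) := by
      apply Complex.ext <;> simp
    have harg : Complex.arg (1 + (x : ℂ) * I) ≠ Real.pi := by
      have h2 : |Complex.arg (1 + (x : ℂ) * I)| < Real.pi / 2 := by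
        rw [Complex.abs_arg_lt_pi_div_two_iff]
        left; simp
      intro h
      rw [h] at h2
      have := Real.pi_pos
      rw [abs_of_pos this] at h2
      linarith
    rw [hconj, Complex.log_conj _ harg]
    rw [show ∀ a b : ℂ, -I / 2 * (↑(Real.log r) + a) - -I / 2 * (↑(Real.log r) + b)
        = -I / 2 * (a - b) from fun a b => by ring]
    rw [Complex.sub_conj, Complex.log_im]
    have hargval : Complex.arg (1 + (x : ℂ) * I) = Real.arctan x := by
      have h2 : |Complex.arg (1 + (x : ℂ) * I)| < Real.pi / 2 := by
        rw [Complex.abs_arg_lt_pi_div_two_iff]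
        left; simp
      rw [abs_lt] at h2
      rw [← Real.arctan_tan (x := Complex.arg (1 + (x : ℂ) * I)) h2.1 h2.2,
        Complex.tan_arg]
      simp
    rw [hargval]
    push_cast
    ring_nf
    rw [I_sq]
    ring
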